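/- Under these hypotheses, if g ≥ 2 then λ_{g-1}² = 2 λ_g λ_{g-2}, and consequently λ_{g-1}³ = 2 λ_g λ_{g-1} λ_{g-2}. -/
import Mathlib


open Polynomial

lemma coeff_sum_aux (R : Type*) [CommRing R] (n : ℕ) (f : ℕ → R) (m : ℕ) (hm : m ≤ n) :
    (∑ i ∈ Finset.range (n + 1), C (f i) * X ^ (n - i)).coeff m = f (n - m) := by
  rw [finset_sum_coeff]
  rw [Finset.sum_eq_single (n - m)]
  · rw [coeff_C_mul, coeff_X_pow, if_pos (by omega), mul_one]
  · intro i hi hne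
    rw [Finset.mem_range] at hi
    rw [coeff_C_mul, coeff_X_pow, if_neg (by omega), mul_zero]
  · intro hmem
    exact absurd (Finset.mem_range.mpr (by omega)) hmem

/-- Mumford's relation `(Σ_{i=0}^g (-1)^i λ_i T^{g-i})·(Σ_{j=0}^g λ_j T^{g-j}) = T^{2g}`
in `R[T]` implies, for `g ≥ 2`, that `λ_{g-1}² = 2 λ_g λ_{g-2}`, and consequently
`λ_{g-1}³ = 2 λ_g λ_{g-1} λ_{g-2}`. -/
theorem lambda_g_sub_one_relations (R : Type*) [CommRing R] (g : ℕ) (hg : 1 ≤ g) (l : ℕ → R)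
    (h : (∑ i ∈ Finset.range (g + 1), C ((-1 : R) ^ i * l i) * X ^ (g - i)) *
         (∑ j ∈ Finset.range (g + 1), C (l j) * X ^ (g - j)) = X ^ (2 * g))
    (hg2 : 2 ≤ g) :
    l (g - 1) ^ 2 = 2 * (l g * l (g - 2)) ∧
    l (g - 1) ^ 3 = 2 * (l g * l (g - 1) * l (g - 2)) := by
  obtain ⟨k, rfl⟩ : ∃ k, g = k + 2 := ⟨g - 2, by omega⟩
  have hco := congrArg (fun p => coeff p 2) h
  simp only [coeff_mul] at hco
  rw [Finset.Nat.sum_antidiagonal_eq_sum_range_succ_mk] at hco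
  rw [Finset.sum_range_succ, Finset.sum_range_succ, Finset.sum_range_succ,
    Finset.sum_range_zero] at hco
  have c0 := coeff_sum_aux R (k + 2) (fun i => (-1 : R) ^ i * l i) 0 (by omega)
  have c1 := coeff_sum_aux R (k + 2) (fun i => (-1 : R) ^ i * l i) 1 (by omega)
  have c2 := coeff_sum_aux R (k + 2) (fun i => (-1 : R) ^ i * l i) 2 (by omega)
  have d0 := coeff_sum_aux R (k + 2) l 0 (by omega)
  have d1 := coeff_sum_aux R (k + 2) l 1 (by omega)
  have d2 := coeff_sum_aux R (k + 2) l 2 (by omega)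
  simp only [c0, c1, c2, d0, d1, d2, coeff_X_pow] at hco
  norm_num at hco
  -- hco now an equation in R
  have hk2 : (k + 2 : ℕ) - 2 = k := by omega
  have hk1 : (k + 2 : ℕ) - 1 = k + 1 := by omega
  rw [hk1, hk2]
  have hsq : (-1 : R) ^ k * (-1 : R) ^ k = 1 := by
    rw [← mul_pow]; norm_num
  rw [if_neg (by omega)] at hco
  have key : l (k + 1) ^ 2 = 2 * (l (k + 2) * l k) := by
    have e1 : (-1 : R) ^ (k + 1) = -(-1 : R) ^ k := by rw [pow_succ]; ring
    have e2 : (-1 : R) ^ (k + 2) = (-1 : R) ^ k := by rw [pow_add]; norm_num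
    rw [e1, e2] at hco
    linear_combination (-(-1 : R) ^ k) * hco +
      (2 * (l (k + 2) * l k) - l (k + 1) ^ 2) * hsq
  refine ⟨key, ?_⟩
  calc l (k + 1) ^ 3 = l (k + 1) ^ 2 * l (k + 1) := by ring
    _ = 2 * (l (k + 2) * l k) * l (k + 1) := by rw [key]
    _ = 2 * (l (k + 2) * l (k + 1) * l k) := by ring
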